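/- (Proposition, part (ii)) Assume p_M > 0 for all M ∈ D_I. If a ∈ A(I) satisfies B_φ(a, b) = φ(ab) = 0 for all b ∈ A(ι(I)), then a = 0. -/

import Mathlib

noncomputable section
open scoped InnerProductSpace ComplexConjugate
open ContinuousLinearMap

namespace Fermion

variable (L : Type) [Fintype L] [LinearOrder L]

/-- The fermionic Fock space over the one-particle space `h = ℓ²(L)`, realized concretely
via its orthonormal basis indexed by the finite subsets of `L` (the vectors `f_M`). -/
abbrev FockSpace := EuclideanSpace ℂ (Finset L)

variable {L}

/-- The vacuum vector `Ψ = f_∅`. -/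
def vac : FockSpace L := EuclideanSpace.single ∅ 1

/-- Jordan–Wigner sign factor. -/
def jwSign (l : L) (S : Finset L) : ℂ := (-1 : ℂ) ^ (S.filter (fun k => k < l)).card

/-- The creation operator `a*_l = a*(e_l)`. -/
def cre (l : L) : FockSpace L →L[ℂ] FockSpace L :=
  LinearMap.toContinuousLinearMap <|
    (EuclideanSpace.basisFun (Finset L) ℂ).toBasis.constr ℂ fun S =>
      if l ∈ S then 0 else jwSign l S • EuclideanSpace.single (insert l S) 1

/-- The annihilation operator `a_l = a(e_l)`. -/
def ann (l : L) : FockSpace L →L[ℂ] FockSpace L := ContinuousLinearMap.adjoint (cre l)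

/-- The vector `f_{(l_1,…,l_n)} = a*_{l_1} ⋯ a*_{l_n} Ψ  (= P (e_{l_1} ⊗ ⋯ ⊗ e_{l_n}))`. -/
def fvec (M : List L) : FockSpace L := M.foldr (fun l v => cre l v) vac

/-- The algebra `A(I)` : the unital *-subalgebra of `B(H)` generated by `{a_l : l ∈ I}`. -/
def A (I : Finset L) : StarSubalgebra ℂ (FockSpace L →L[ℂ] FockSpace L) :=
  StarAlgebra.adjoin ℂ (ann '' (I : Set L))

/-- The trace on `B(H)`. -/
def Tr (T : FockSpace L →L[ℂ] FockSpace L) : ℂ := LinearMap.trace ℂ (FockSpace L) T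

/-- The rank-one operator `|x⟩⟨y|`. -/
def ketbra (x y : FockSpace L) : FockSpace L →L[ℂ] FockSpace L :=
  (ContinuousLinearMap.toSpanSingleton ℂ x).comp (innerSL ℂ y)

/-- A valid choice of `D_I`: `D S` enumerates the finite set `S` without repetitions. -/
def IsEnum (D : Finset L → List L) : Prop := ∀ S : Finset L, (D S).Nodup ∧ (D S).toFinset = S

/-- The entangled vector `Φ = Σ_{M ∈ D_I} p_M^{1/2} f_{M ι(M)}`. -/
def Phi (D : Finset L → List L) (p : Finset L → ℝ) (I : Finset L) (ι : L → L) : FockSpace L :=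
  ∑ S ∈ I.powerset, (Real.sqrt (p S) : ℂ) • fvec (D S ++ (D S).map ι)

/-- The state `φ(x) = ⟨Φ, xΦ⟩`. -/
def phi (D : Finset L → List L) (p : Finset L → ℝ) (I : Finset L) (ι : L → L)
    (x : FockSpace L →L[ℂ] FockSpace L) : ℂ :=
  ⟪Phi D p I ι, x (Phi D p I ι)⟫_ℂ



lemma jwSign_ne_zero (l : L) (S : Finset L) : jwSign l S ≠ 0 := by
  simp [jwSign, pow_ne_zero]

lemma jwSign_mul_self (l : L) (S : Finset L) : jwSign l S * jwSign l S = 1 := by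
  simp [jwSign, ← pow_add, ← two_mul, pow_mul]

lemma conj_jwSign (l : L) (S : Finset L) : conj (jwSign l S) = jwSign l S := by
  simp [jwSign]

lemma cre_single (l : L) (S : Finset L) :
    cre l (EuclideanSpace.single S 1) =
      if l ∈ S then 0 else jwSign l S • EuclideanSpace.single (insert l S) 1 := by
  have h := (EuclideanSpace.basisFun (Finset L) ℂ).toBasis.constr_basis ℂ
    (fun S => if l ∈ S then 0 else jwSign l S • EuclideanSpace.single (insert l S) (1:ℂ)) S
  rw [cre, LinearMap.coe_toContinuousLinearMap']
  rwa [OrthonormalBasis.coe_toBasis, EuclideanSpace.basisFun_apply] at h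


lemma apply_eq_inner (v : EuclideanSpace ℂ (Finset L)) (S' : Finset L) :
    v S' = ⟪EuclideanSpace.single S' (1:ℂ), v⟫_ℂ := by
  simp [EuclideanSpace.inner_single_left]

lemma ann_single (l : L) (S : Finset L) :
    ann l (EuclideanSpace.single S 1) =
      if l ∈ S then jwSign l (S.erase l) • EuclideanSpace.single (S.erase l) 1 else 0 := by
  ext S'
  rw [apply_eq_inner ((ann l) (EuclideanSpace.single S 1)) S']
  simp only [ann]
  rw [ContinuousLinearMap.adjoint_inner_right, cre_single]
  by_cases hl : l ∈ S'
  · simp only [hl, if_true, inner_zero_left]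
    by_cases hS : l ∈ S
    · simp only [hS, if_true, PiLp.smul_apply, EuclideanSpace.single_apply, smul_eq_mul]
      have : S' ≠ S.erase l := fun h => by simp [h] at hl
      simp [this]
    · simp [hS]
  · simp only [hl, if_false, inner_smul_left, EuclideanSpace.inner_single_left,
      EuclideanSpace.single_apply, conj_jwSign, map_one, one_mul]
    by_cases hS : l ∈ S
    · by_cases he : S' = S.erase l
      · have : S = insert l S' := by
          subst he; rw [Finset.insert_erase hS]
        subst he
        simp [Finset.insert_erase hS, hS, PiLp.smul_apply, EuclideanSpace.single_apply]
      · have : S ≠ insert l S' := by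
          intro hx; apply he; rw [hx]; simp [hl]
        simp only [hS, if_true, PiLp.smul_apply, EuclideanSpace.single_apply, smul_eq_mul]
        have h2 : ¬ (S'  = S.erase l) := he
        simp [h2]
        exact fun hx => absurd hx.symm this
    · have : S ≠ insert l S' := fun hx => hS (hx ▸ Finset.mem_insert_self l S')
      simp [hS]
      exact fun hx => absurd hx.symm this


/-- Matrix element of an operator in the basis of `EuclideanSpace.single`s. -/
def me (a : EuclideanSpace ℂ (Finset L) →L[ℂ] EuclideanSpace ℂ (Finset L))
    (S' S : Finset L) : ℂ := (a (EuclideanSpace.single S 1)) S'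

lemma euclid_decomp (x : EuclideanSpace ℂ (Finset L)) :
    x = ∑ S : Finset L, x S • EuclideanSpace.single S (1:ℂ) := by
  ext S'
  rw [WithLp.ofLp_sum, Finset.sum_apply]
  simp [EuclideanSpace.single_apply, Finset.sum_ite_eq', eq_comm (a := S')]

lemma me_mul (a b : EuclideanSpace ℂ (Finset L) →L[ℂ] EuclideanSpace ℂ (Finset L))
    (S' S : Finset L) : me (a*b) S' S = ∑ S'' : Finset L, me a S' S'' * me b S'' S := by
  unfold me
  rw [ContinuousLinearMap.mul_apply]
  conv_lhs => rw [euclid_decomp (b (EuclideanSpace.single S 1))]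
  rw [map_sum, WithLp.ofLp_sum, Finset.sum_apply]
  congr 1; funext S''
  simp [mul_comm]

lemma eq_zero_of_me (a : EuclideanSpace ℂ (Finset L) →L[ℂ] EuclideanSpace ℂ (Finset L))
    (h : ∀ S' S, me a S' S = 0) : a = 0 := by
  ext x S'
  conv_lhs => rw [euclid_decomp x]
  rw [map_sum, WithLp.ofLp_sum, Finset.sum_apply]
  refine Finset.sum_eq_zero fun S _ => ?_
  rw [map_smul]
  have := h S' S
  unfold me at this
  simp [this]



lemma me_star (a : EuclideanSpace ℂ (Finset L) →L[ℂ] EuclideanSpace ℂ (Finset L))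
    (S' S : Finset L) : me (star a) S' S = conj (me a S S') := by
  unfold me
  rw [apply_eq_inner ((star a) (EuclideanSpace.single S 1)) S',
    ContinuousLinearMap.star_eq_adjoint, ContinuousLinearMap.adjoint_inner_right,
    apply_eq_inner (a (EuclideanSpace.single S' 1)) S, ← inner_conj_symm]

lemma me_ann (l : L) (S' S : Finset L) :
    me (ann l) S' S = if l ∈ S ∧ S' = S.erase l then jwSign l (S.erase l) else 0 := by
  unfold me
  rw [ann_single]
  by_cases hS : l ∈ S
  · simp only [hS, true_and, if_true, PiLp.smul_apply, EuclideanSpace.single_apply, smul_eq_mul]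
    by_cases he : S' = S.erase l <;> simp [he]
  · simp [hS]

lemma sdiff_erase_of_mem {I : Finset L} {l : L} (hl : l ∈ I) (S : Finset L) :
    (S.erase l) \ I = S \ I := by
  ext k
  simp only [Finset.mem_sdiff, Finset.mem_erase]
  constructor
  · rintro ⟨⟨-, hk⟩, hkI⟩; exact ⟨hk, hkI⟩
  · rintro ⟨hk, hkI⟩; exact ⟨⟨fun h => hkI (h ▸ hl), hk⟩, hkI⟩

lemma suppA {I : Finset L} {a : EuclideanSpace ℂ (Finset L) →L[ℂ] EuclideanSpace ℂ (Finset L)}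
    (ha : a ∈ A I) : ∀ S' S : Finset L, S' \ I ≠ S \ I → me a S' S = 0 := by
  induction ha using StarAlgebra.adjoin_induction with
  | mem x hx =>
    obtain ⟨l, hl, rfl⟩ := hx
    intro S' S hne
    rw [me_ann]
    rcases Classical.em (l ∈ S ∧ S' = S.erase l) with ⟨h1, h2⟩ | hc
    · exact absurd (h2 ▸ sdiff_erase_of_mem hl S) hne
    · simp [hc]
  | algebraMap r =>
    intro S' S hne
    have : S' ≠ S := fun h => hne (h ▸ rfl)
    simp [me, Algebra.algebraMap_eq_smul_one, EuclideanSpace.single_apply, this]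
  | add x y hx hy px py =>
    intro S' S hne
    have : me (x + y) S' S = me x S' S + me y S' S := by simp [me]
    rw [this, px S' S hne, py S' S hne, add_zero]
  | mul x y hx hy px py =>
    intro S' S hne
    rw [me_mul]
    refine Finset.sum_eq_zero fun S'' _ => ?_
    by_cases h : S'' \ I = S \ I
    · rw [px S' S'' (fun hc => hne (hc.trans h)), zero_mul]
    · rw [py S'' S h, mul_zero]
  | star x hx px =>
    intro S' S hne
    rw [me_star, px S S' (Ne.symm hne), map_zero]


def ts (T M : Finset L) : ℂ := ∏ m ∈ M, jwSign m T

lemma ts_mul_self (T M : Finset L) : ts T M * ts T M = 1 := by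
  rw [ts, ← Finset.prod_mul_distrib]
  exact Finset.prod_eq_one fun m _ => jwSign_mul_self m T

lemma ts_ne_zero (T M : Finset L) : ts T M ≠ 0 :=
  fun h => one_ne_zero (α := ℂ) (by rw [← ts_mul_self T M, h, mul_zero])

lemma conj_ts (T M : Finset L) : conj (ts T M) = ts T M := by
  rw [ts, map_prod]
  exact Finset.prod_congr rfl fun m _ => conj_jwSign m T

lemma ts_erase {l : L} {M : Finset L} (T : Finset L) (hl : l ∈ M) :
    ts T M = jwSign l T * ts T (M.erase l) := (Finset.mul_prod_erase M _ hl).symm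

lemma jwSign_union {l : L} {A B : Finset L} (hAB : Disjoint A B) :
    jwSign l (A ∪ B) = jwSign l A * jwSign l B := by
  rw [jwSign, jwSign, jwSign, Finset.filter_union,
    Finset.card_union_of_disjoint (Finset.disjoint_filter_filter hAB), pow_add]

lemma union_right_inj {I T M M' : Finset L} (hT : Disjoint T I) (hM : M ⊆ I) (hM' : M' ⊆ I)
    (h : M' ∪ T = M ∪ T) : M' = M := by
  have e : ∀ N : Finset L, N ⊆ I → (N ∪ T) ∩ I = N := fun N hN => by
    ext k
    simp only [Finset.mem_inter, Finset.mem_union]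
    constructor
    · rintro ⟨hk | hk, hkI⟩
      · exact hk
      · exact absurd hkI (Finset.disjoint_left.mp hT hk)
    · exact fun hk => ⟨Or.inl hk, hN hk⟩
  rw [← e M' hM', ← e M hM, h]

lemma sdiff_eq_of_subset {I T M : Finset L} (hT : Disjoint T I) (hM : M ⊆ I) :
    (M ∪ T) \ I = T := by
  rw [Finset.union_sdiff_distrib, Finset.sdiff_eq_empty_iff_subset.mpr hM,
    Finset.sdiff_eq_self_of_disjoint hT, Finset.empty_union]

lemma inter_union_sdiff_self (I S : Finset L) : (S ∩ I) ∪ (S \ I) = S := by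
  ext k; simp only [Finset.mem_union, Finset.mem_inter, Finset.mem_sdiff]; tauto


lemma sum_reindex (I T : Finset L) (hT : Disjoint T I) (F : Finset L → ℂ) :
    (∑ S : Finset L, if S \ I = T then F (S ∩ I) else 0) = ∑ M ∈ I.powerset, F M := by
  rw [← Finset.sum_filter]
  refine Finset.sum_nbij' (i := fun S => S ∩ I) (j := fun M => M ∪ T) ?_ ?_ ?_ ?_ ?_
  · intro S hS
    simp [Finset.inter_subset_right]
  · intro M hM
    simp only [Finset.mem_filter, Finset.mem_univ, true_and]
    exact sdiff_eq_of_subset hT (Finset.mem_powerset.mp hM)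
  · intro S hS
    simp only [Finset.mem_filter, Finset.mem_univ, true_and] at hS
    show S ∩ I ∪ T = S
    rw [← hS, inter_union_sdiff_self]
  · intro M hM
    have e : ∀ N : Finset L, N ⊆ I → (N ∪ T) ∩ I = N := fun N hN => by
      ext k
      simp only [Finset.mem_inter, Finset.mem_union]
      constructor
      · rintro ⟨hk | hk, hkI⟩
        · exact hk
        · exact absurd hkI (Finset.disjoint_left.mp hT hk)
      · exact fun hk => ⟨Or.inl hk, hN hk⟩
    exact e M (Finset.mem_powerset.mp hM)
  · intro S hS
    rfl


lemma erase_union_of_not_mem {l : L} {M T : Finset L} (hl : l ∉ T) :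
    (M ∪ T).erase l = M.erase l ∪ T := by
  rw [Finset.erase_union_distrib, Finset.erase_eq_of_notMem hl]

set_option maxHeartbeats 1000000 in
lemma signA {I : Finset L} {a : EuclideanSpace ℂ (Finset L) →L[ℂ] EuclideanSpace ℂ (Finset L)}
    (ha : a ∈ A I) : ∀ T M' M : Finset L, Disjoint T I → M ⊆ I → M' ⊆ I →
      me a (M' ∪ T) (M ∪ T) = ts T M' * ts T M * me a M' M := by
  induction ha using StarAlgebra.adjoin_induction with
  | mem x hx =>
    obtain ⟨l, hl, rfl⟩ := hx
    rw [Finset.mem_coe] at hl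
    intro T M' M hT hM hM'
    have hlT : l ∉ T := Finset.disjoint_left.mp (hT.symm) hl
    rw [me_ann, me_ann]
    have h1 : l ∈ M ∪ T ↔ l ∈ M := by simp [hlT]
    by_cases hlM : l ∈ M
    · have h2 : (M ∪ T).erase l = M.erase l ∪ T := erase_union_of_not_mem hlT
      by_cases he : M' = M.erase l
      · subst he
        have h3 : M.erase l ∪ T = (M ∪ T).erase l := h2.symm
        rw [if_pos ⟨h1.mpr hlM, h3⟩, if_pos ⟨hlM, rfl⟩, h2]
        rw [jwSign_union (Finset.disjoint_of_subset_left ((Finset.erase_subset l M).trans hM) hT.symm)]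
        rw [ts_erase T hlM]
        calc jwSign l (M.erase l) * jwSign l T
            = (ts T (M.erase l) * ts T (M.erase l)) * (jwSign l (M.erase l) * jwSign l T) := by
              rw [ts_mul_self, one_mul]
          _ = ts T (M.erase l) * (jwSign l T * ts T (M.erase l)) * jwSign l (M.erase l) := by ring
      · have h3 : ¬ (M' ∪ T = (M ∪ T).erase l) := by
          rw [h2]
          exact fun hc => he (union_right_inj hT ((Finset.erase_subset l M).trans hM) hM' hc)
        simp [h3, he]
    · simp [h1, hlM]
  | algebraMap r =>
    intro T M' M hT hM hM'
    have hme : ∀ N' N : Finset L, me (algebraMap ℂ _ r) N' N = if N' = N then r else 0 := by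
      intro N' N
      simp [me, Algebra.algebraMap_eq_smul_one, EuclideanSpace.single_apply]
    rw [hme, hme]
    by_cases he : M' = M
    · subst he
      simp [← mul_assoc, ts_mul_self]
    · have : ¬ (M' ∪ T = M ∪ T) := fun hc => he (union_right_inj hT hM hM' hc)
      simp [he, this]
  | add x y hx hy px py =>
    intro T M' M hT hM hM'
    have hadd : ∀ N' N : Finset L, me (x + y) N' N = me x N' N + me y N' N := by
      intro N' N; simp [me]
    rw [hadd, hadd, px T M' M hT hM hM', py T M' M hT hM hM']
    ring
  | mul x y hx hy px py =>
    intro T M' M hT hM hM'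
    rw [me_mul, me_mul]
    have hMT : (M ∪ T) \ I = T := sdiff_eq_of_subset hT hM
    have lhs_eq : ∀ S : Finset L, me x (M' ∪ T) S * me y S (M ∪ T) =
        if S \ I = T then ts T M' * ts T M * (me x M' (S ∩ I) * me y (S ∩ I) M) else 0 := by
      intro S
      by_cases hS : S \ I = T
      · have hSdecomp : (S ∩ I) ∪ T = S := by rw [← hS, inter_union_sdiff_self]
        have hSI : S ∩ I ⊆ I := Finset.inter_subset_right
        have hx1 := px T M' (S ∩ I) hT hSI hM'
        have hy1 := py T (S ∩ I) M hT hM hSI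
        rw [hSdecomp] at hx1 hy1
        rw [if_pos hS, hx1, hy1]
        calc (ts T M' * ts T (S ∩ I) * me x M' (S ∩ I)) * (ts T (S ∩ I) * ts T M * me y (S ∩ I) M)
            = (ts T (S ∩ I) * ts T (S ∩ I)) * (ts T M' * ts T M * (me x M' (S ∩ I) * me y (S ∩ I) M)) := by
              ring
          _ = ts T M' * ts T M * (me x M' (S ∩ I) * me y (S ∩ I) M) := by rw [ts_mul_self, one_mul]
      · rw [if_neg hS, suppA hy S (M ∪ T) (by rw [hMT]; exact hS), mul_zero]
    have rhs_eq : ∀ S : Finset L, me x M' S * me y S M =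
        if S \ I = (∅ : Finset L) then me x M' (S ∩ I) * me y (S ∩ I) M else 0 := by
      intro S
      by_cases hS : S \ I = (∅ : Finset L)
      · have hSsub : S ⊆ I := Finset.sdiff_eq_empty_iff_subset.mp hS
        rw [if_pos hS, Finset.inter_eq_left.mpr hSsub]
      · have hMI : M \ I = (∅ : Finset L) := Finset.sdiff_eq_empty_iff_subset.mpr hM
        rw [if_neg hS, suppA hy S M (by rw [hMI]; exact hS), mul_zero]
    calc ∑ S : Finset L, me x (M' ∪ T) S * me y S (M ∪ T)
        = ∑ S : Finset L, if S \ I = T then ts T M' * ts T M * (me x M' (S ∩ I) * me y (S ∩ I) M) else 0 :=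
          Finset.sum_congr rfl fun S _ => lhs_eq S
      _ = ∑ N ∈ I.powerset, ts T M' * ts T M * (me x M' N * me y N M) :=
          sum_reindex I T hT (fun N => ts T M' * ts T M * (me x M' N * me y N M))
      _ = ts T M' * ts T M * ∑ N ∈ I.powerset, me x M' N * me y N M := by rw [Finset.mul_sum]
      _ = ts T M' * ts T M * ∑ S : Finset L, (if S \ I = (∅ : Finset L) then me x M' (S ∩ I) * me y (S ∩ I) M else 0) := by
          rw [sum_reindex I ∅ (Finset.disjoint_empty_left I) (fun N => me x M' N * me y N M)]
      _ = ts T M' * ts T M * ∑ S : Finset L, me x M' S * me y S M := by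
          congr 1
          exact Finset.sum_congr rfl fun S _ => (rhs_eq S).symm
  | star x hx px =>
    intro T M' M hT hM hM'
    rw [me_star, me_star, px T M M' hT hM' hM, map_mul, map_mul, conj_ts, conj_ts]
    ring


lemma creList_single (K : List L) (S : Finset L) (hnd : K.Nodup) (hdisj : ∀ l ∈ K, l ∉ S) :
    ∃ c : ℂ, c ≠ 0 ∧ (K.map cre).prod (EuclideanSpace.single S 1) =
      c • EuclideanSpace.single (S ∪ K.toFinset) 1 := by
  induction K with
  | nil => exact ⟨1, one_ne_zero, by simp⟩
  | cons k K ih =>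
    obtain ⟨c, hc, hK⟩ := ih hnd.of_cons (fun l hl => hdisj l (List.mem_cons_of_mem k hl))
    have hk : k ∉ S ∪ K.toFinset := by
      simp only [Finset.mem_union, List.mem_toFinset]
      rintro (hx | hx)
      · exact hdisj k (List.mem_cons_self) hx
      · exact (List.nodup_cons.mp hnd).1 hx
    refine ⟨c * jwSign k (S ∪ K.toFinset), mul_ne_zero hc (jwSign_ne_zero _ _), ?_⟩
    rw [List.map_cons, List.prod_cons, ContinuousLinearMap.mul_apply, hK, map_smul, cre_single,
      if_neg hk]
    rw [smul_smul, List.toFinset_cons, Finset.union_insert]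

lemma ann_mul_cre_single (j : L) (S : Finset L) :
    (ann j * cre j) (EuclideanSpace.single S 1) =
      if j ∈ S then 0 else EuclideanSpace.single S 1 := by
  rw [ContinuousLinearMap.mul_apply, cre_single]
  by_cases hj : j ∈ S
  · simp [hj]
  · rw [if_neg hj, map_smul, ann_single, if_pos (Finset.mem_insert_self j S),
      Finset.erase_insert hj, smul_smul, jwSign_mul_self, one_smul, if_neg hj]

lemma projList_single (K : List L) (S : Finset L) :
    ((K.map (fun j => ann j * cre j)).prod) (EuclideanSpace.single S 1) =
      if ∀ j ∈ K, j ∉ S then EuclideanSpace.single S 1 else 0 := by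
  induction K with
  | nil => simp
  | cons k K ih =>
    rw [List.map_cons, List.prod_cons, ContinuousLinearMap.mul_apply, ih]
    by_cases hK : ∀ j ∈ K, j ∉ S
    · rw [if_pos hK, ann_mul_cre_single]
      by_cases hk : k ∈ S
      · rw [if_pos hk, if_neg]
        push_neg
        exact ⟨k, List.mem_cons_self, hk⟩
      · rw [if_neg hk, if_pos]
        intro j hj
        rcases List.mem_cons.mp hj with rfl | hj
        · exact hk
        · exact hK j hj
    · rw [if_neg hK, map_zero, if_neg]
      push_neg at hK ⊢
      obtain ⟨j, hj, hjS⟩ := hK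
      exact ⟨j, List.mem_cons_of_mem k hj, hjS⟩

lemma annList_single (K : List L) (S : Finset L) (hnd : K.Nodup) :
    (K.toFinset ⊆ S → ∃ c : ℂ, c ≠ 0 ∧ (K.map ann).prod (EuclideanSpace.single S 1) =
      c • EuclideanSpace.single (S \ K.toFinset) 1)
    ∧ (¬ K.toFinset ⊆ S → (K.map ann).prod (EuclideanSpace.single S 1) = 0) := by
  induction K with
  | nil => exact ⟨fun _ => ⟨1, one_ne_zero, by simp⟩, fun h => absurd (by simp) h⟩
  | cons k K ih =>
    obtain ⟨ih1, ih2⟩ := ih hnd.of_cons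
    have hkK : k ∉ K.toFinset := by
      simp only [List.mem_toFinset]; exact (List.nodup_cons.mp hnd).1
    constructor
    · intro hsub
      rw [List.toFinset_cons, Finset.insert_subset_iff] at hsub
      obtain ⟨c, hc, hK⟩ := ih1 hsub.2
      have hkmem : k ∈ S \ K.toFinset := Finset.mem_sdiff.mpr ⟨hsub.1, hkK⟩
      refine ⟨c * jwSign k ((S \ K.toFinset).erase k), mul_ne_zero hc (jwSign_ne_zero _ _), ?_⟩
      rw [List.map_cons, List.prod_cons, ContinuousLinearMap.mul_apply, hK, map_smul, ann_single,
        if_pos hkmem, smul_smul, List.toFinset_cons]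
      have hset : (S \ K.toFinset).erase k = S \ (insert k K.toFinset) := by
        ext x
        simp only [Finset.mem_erase, Finset.mem_sdiff, Finset.mem_insert]
        tauto
      rw [hset]
    · intro hnsub
      rw [List.toFinset_cons, Finset.insert_subset_iff] at hnsub
      push_neg at hnsub
      by_cases hSK : K.toFinset ⊆ S
      · obtain ⟨c, hc, hK⟩ := ih1 hSK
        have hknot : k ∉ S \ K.toFinset := fun hx =>
          hnsub (Finset.mem_sdiff.mp hx).1 hSK
        rw [List.map_cons, List.prod_cons, ContinuousLinearMap.mul_apply, hK, map_smul,
          ann_single, if_neg hknot, smul_zero]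
      · rw [List.map_cons, List.prod_cons, ContinuousLinearMap.mul_apply, ih2 hSK, map_zero]


lemma fvec_eq (K : List L) (hnd : K.Nodup) :
    ∃ c : ℂ, c ≠ 0 ∧ fvec K = c • EuclideanSpace.single K.toFinset 1 := by
  have hfold : ∀ (K' : List L), fvec K' = (K'.map cre).prod (EuclideanSpace.single ∅ 1) := by
    intro K'
    rw [fvec, vac]
    induction K' with
    | nil => simp
    | cons k K'' ih => rw [List.foldr_cons, ih, List.map_cons, List.prod_cons,
        ContinuousLinearMap.mul_apply]
  obtain ⟨c, hc, h⟩ := creList_single K ∅ hnd (by simp)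
  exact ⟨c, hc, by rw [hfold K, h, Finset.empty_union]⟩

lemma cre_mem_A {J : Finset L} {l : L} (hl : l ∈ J) : cre l ∈ A J := by
  have h1 : ann l ∈ A J := StarAlgebra.subset_adjoin ℂ _ ⟨l, hl, rfl⟩
  have h2 := star_mem (s := A J) h1
  rwa [ann, ContinuousLinearMap.star_eq_adjoint, ContinuousLinearMap.adjoint_adjoint] at h2

lemma ann_mem_A {J : Finset L} {l : L} (hl : l ∈ J) : ann l ∈ A J :=
  StarAlgebra.subset_adjoin ℂ _ ⟨l, hl, rfl⟩

/-- Proposition, part (ii). Assume `p_M > 0` for all `M ∈ D_I`.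
If `a ∈ A(I)` satisfies `B_φ(a, b) = φ(ab) = 0` for all `b ∈ A(ι(I))`, then `a = 0`. -/
theorem nondegenerate_right
    {L : Type} [Fintype L] [LinearOrder L]
    (I J : Finset L) (ι : L → L)
    (hinj : Set.InjOn ι (I : Set L)) (himg : I.image ι = J) (hIJ : Disjoint I J)
    (D : Finset L → List L) (hD : IsEnum D)
    (p : Finset L → ℝ)
    (hppos : ∀ S ∈ I.powerset, 0 < p S) (hp1 : ∑ S ∈ I.powerset, p S = 1)
    (a : FockSpace L →L[ℂ] FockSpace L) (ha : a ∈ A I)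
    (h : ∀ b ∈ A (I.image ι), phi D p I ι (a * b) = 0) :
    a = 0 := by
  subst himg
  -- basic facts
  have hdisj_mem : ∀ {x : L}, x ∈ I → x ∈ I.image ι → False := fun hx hx' =>
    Finset.disjoint_left.mp hIJ hx hx'
  have himg_subset : ∀ {S : Finset L}, S ⊆ I → S.image ι ⊆ I.image ι := fun hS =>
    Finset.image_subset_image hS
  have hDmem : ∀ (X : Finset L) {j : L}, j ∈ D X → j ∈ X := fun X {j} hj => by
    rw [← (hD X).2]; exact List.mem_toFinset.mpr hj
  have hlistmap : ∀ (K : List L) (f : L → L), (K.map f).toFinset = K.toFinset.image f := by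
    intro K f
    ext x
    simp only [List.mem_toFinset, List.mem_map, Finset.mem_image]
  have himg_inj : ∀ M S : Finset L, M ⊆ I → S ⊆ I → M.image ι = S.image ι → M = S := by
    have key : ∀ M S : Finset L, M ⊆ I → S ⊆ I → M.image ι ⊆ S.image ι → M ⊆ S := by
      intro M S hM hS hMS m hm
      have : ι m ∈ S.image ι := hMS (Finset.mem_image_of_mem ι hm)
      obtain ⟨s, hs, hsm⟩ := Finset.mem_image.mp this
      rwa [← hinj (hS hs) (hM hm) hsm]
    intro M S hM hS hMS
    exact Finset.Subset.antisymm (key M S hM hS hMS.le) (key S M hS hM hMS.ge)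
  -- scalar decomposition of the summands of Phi
  have hfS : ∀ S : Finset L, ∃ c : ℂ, c ≠ 0 ∧ (S ⊆ I →
      fvec (D S ++ (D S).map ι) = c • EuclideanSpace.single (S ∪ S.image ι) (1:ℂ)) := by
    intro S
    by_cases hS : S ⊆ I
    · obtain ⟨hnd, htf⟩ := hD S
      have hmem : ∀ {x : L}, x ∈ D S → x ∈ S := fun hx =>
        htf ▸ List.mem_toFinset.mpr hx
      have hndm : ((D S).map ι).Nodup := by
        refine hnd.map_on ?_
        intro x hx y hy hxy
        exact hinj (hS (hmem hx)) (hS (hmem hy)) hxy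
      have hdisjl : (D S).Disjoint ((D S).map ι) := by
        intro x hx hx'
        obtain ⟨y, hy, hyx⟩ := List.mem_map.mp hx'
        refine hdisj_mem (hS (hmem hx)) ?_
        rw [← hyx]
        exact Finset.mem_image_of_mem ι (hS (hmem hy))
      obtain ⟨c, hc, hf⟩ := fvec_eq _ (hnd.append hndm hdisjl)
      refine ⟨c, hc, fun _ => ?_⟩
      rw [hf]
      congr 1
      rw [List.toFinset_append, hlistmap, htf]
    · exact ⟨1, one_ne_zero, fun hc => absurd hc hS⟩
  choose c hc0 hcf using hfS
  have hPhi : Phi D p I ι = ∑ S ∈ I.powerset,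
      (((Real.sqrt (p S) : ℂ)) * c S) • EuclideanSpace.single (S ∪ S.image ι) (1:ℂ) := by
    rw [Phi]
    refine Finset.sum_congr rfl fun S hS => ?_
    rw [hcf S (Finset.mem_powerset.mp hS), smul_smul]
  have hscal_ne : ∀ S : Finset L, S ∈ I.powerset → ((Real.sqrt (p S) : ℂ)) * c S ≠ 0 := by
    intro S hS
    refine mul_ne_zero ?_ (hc0 S)
    simp only [ne_eq, Complex.ofReal_eq_zero]
    exact ne_of_gt (Real.sqrt_pos.mpr (hppos S hS))
  set g := ContinuousLinearMap.adjoint a with hgdef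
  have hg : g ∈ A I := by
    have := star_mem (s := A I) ha
    rwa [ContinuousLinearMap.star_eq_adjoint] at this
  -- list product membership
  have hprodmem : ∀ (lst : List (FockSpace L →L[ℂ] FockSpace L)),
      (∀ x ∈ lst, x ∈ A (I.image ι)) → lst.prod ∈ A (I.image ι) := by
    intro lst
    induction lst with
    | nil => intro _; simpa using one_mem (A (I.image ι))
    | cons x xs ih =>
      intro hx
      rw [List.prod_cons]
      exact mul_mem (hx x (List.mem_cons_self)) (ih fun y hy => hx y (List.mem_cons_of_mem x hy))
  -- Step 1: components of g Phi vanish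
  have key1 : ∀ N T : Finset L, N ⊆ I → T ⊆ I.image ι →
      (g (Phi D p I ι)) (N ∪ T) = 0 := by
    intro N T hN hT
    set b1 := ((D T).map cre).prod with hb1
    set b2 := ((D (I.image ι \ N.image ι)).map (fun j => ann j * cre j)).prod with hb2
    set b3 := ((D (N.image ι)).map ann).prod with hb3
    have hb_mem : b1 * (b2 * b3) ∈ A (I.image ι) := by
      refine mul_mem (hprodmem _ ?_) (mul_mem (hprodmem _ ?_) (hprodmem _ ?_))
      · intro x hx
        obtain ⟨j, hj, rfl⟩ := List.mem_map.mp hx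
        exact cre_mem_A (hT (hDmem T hj))
      · intro x hx
        obtain ⟨j, hj, rfl⟩ := List.mem_map.mp hx
        have hjm : j ∈ I.image ι \ N.image ι := hDmem _ hj
        have hjm' : j ∈ I.image ι := (Finset.mem_sdiff.mp hjm).1
        exact mul_mem (ann_mem_A hjm') (cre_mem_A hjm')
      · intro x hx
        obtain ⟨j, hj, rfl⟩ := List.mem_map.mp hx
        exact ann_mem_A (himg_subset hN (hDmem _ hj))
    -- action on basis vectors
    have hstep0 : ∀ S : Finset L, S ⊆ I → S ≠ N →
        (b1 * (b2 * b3)) (EuclideanSpace.single (S ∪ S.image ι) (1:ℂ)) = 0 := by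
      intro S hS hSN
      rw [ContinuousLinearMap.mul_apply, ContinuousLinearMap.mul_apply]
      obtain ⟨hnd3, htf3⟩ := hD (N.image ι)
      by_cases hNS : N ⊆ S
      · -- annihilators survive, projector kills
        have hsub : (D (N.image ι)).toFinset ⊆ S ∪ S.image ι := by
          rw [htf3]
          exact fun x hx => Finset.mem_union_right _ (Finset.image_subset_image hNS hx)
        obtain ⟨c1, hc1, h3⟩ := (annList_single (D (N.image ι)) (S ∪ S.image ι) hnd3).1 hsub
        rw [h3, map_smul, map_smul]
        obtain ⟨s, hsS, hsN⟩ := Finset.not_subset.mp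
          (fun hc => hSN (Finset.Subset.antisymm hc hNS))
        have hkill : ¬ (∀ j ∈ D (I.image ι \ N.image ι), j ∉ (S ∪ S.image ι) \ (D (N.image ι)).toFinset) := by
          push_neg
          refine ⟨ι s, ?_, ?_⟩
          · rw [← List.mem_toFinset, (hD (I.image ι \ N.image ι)).2, Finset.mem_sdiff]
            constructor
            · exact Finset.mem_image_of_mem ι (hS hsS)
            · intro hc
              obtain ⟨n, hn, hns⟩ := Finset.mem_image.mp hc
              exact hsN (hinj (hN hn) (hS hsS) hns ▸ hn)
          · rw [htf3, Finset.mem_sdiff]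
            constructor
            · exact Finset.mem_union_right _ (Finset.mem_image_of_mem ι hsS)
            · intro hc
              obtain ⟨n, hn, hns⟩ := Finset.mem_image.mp hc
              exact hsN (hinj (hN hn) (hS hsS) hns ▸ hn)
        rw [projList_single, if_neg hkill, map_zero, smul_zero]
      · -- annihilators already kill
        have hnsub : ¬ (D (N.image ι)).toFinset ⊆ S ∪ S.image ι := by
          rw [htf3]
          obtain ⟨n, hnN, hnS⟩ := Finset.not_subset.mp hNS
          intro hc
          have := hc (Finset.mem_image_of_mem ι hnN)
          rcases Finset.mem_union.mp this with hx | hx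
          · exact hdisj_mem (hS hx) (Finset.mem_image_of_mem ι (hN hnN))
          · obtain ⟨s, hsS, hsn⟩ := Finset.mem_image.mp hx
            exact hnS (hinj (hS hsS) (hN hnN) hsn ▸ hsS)
        rw [(annList_single (D (N.image ι)) (S ∪ S.image ι) hnd3).2 hnsub, map_zero, map_zero]
    have hstepN : ∃ d : ℂ, d ≠ 0 ∧
        (b1 * (b2 * b3)) (EuclideanSpace.single (N ∪ N.image ι) (1:ℂ)) =
          d • EuclideanSpace.single (N ∪ T) (1:ℂ) := by
      rw [ContinuousLinearMap.mul_apply, ContinuousLinearMap.mul_apply]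
      obtain ⟨hnd3, htf3⟩ := hD (N.image ι)
      have hsub : (D (N.image ι)).toFinset ⊆ N ∪ N.image ι := by
        rw [htf3]; exact Finset.subset_union_right
      obtain ⟨c1, hc1, h3⟩ := (annList_single (D (N.image ι)) (N ∪ N.image ι) hnd3).1 hsub
      have hset : (N ∪ N.image ι) \ (D (N.image ι)).toFinset = N := by
        rw [htf3]
        ext x
        simp only [Finset.mem_sdiff, Finset.mem_union]
        constructor
        · rintro ⟨hx | hx, hx'⟩
          · exact hx
          · exact absurd hx hx'
        · intro hx
          exact ⟨Or.inl hx, fun hc => hdisj_mem (hN hx) (himg_subset hN hc)⟩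
      rw [hset] at h3
      have hproj : ∀ j ∈ D (I.image ι \ N.image ι), j ∉ N := by
        intro j hj hjN
        have : j ∈ I.image ι \ N.image ι := hDmem _ hj
        exact hdisj_mem (hN hjN) (Finset.mem_sdiff.mp this).1
      have hdisjT : ∀ l ∈ D T, l ∉ N := fun l hl hlN =>
        hdisj_mem (hN hlN) (hT (hDmem T hl))
      obtain ⟨c2, hc2, h1⟩ := creList_single (D T) N (hD T).1 hdisjT
      rw [h3, map_smul, map_smul, projList_single, if_pos hproj, h1, (hD T).2, smul_smul]
      exact ⟨c1 * c2, mul_ne_zero hc1 hc2, rfl⟩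
    obtain ⟨d, hd0, hbN⟩ := hstepN
    have hbPhi : (b1 * (b2 * b3)) (Phi D p I ι) =
        (((Real.sqrt (p N) : ℂ)) * c N * d) • EuclideanSpace.single (N ∪ T) (1:ℂ) := by
      rw [hPhi, map_sum]
      rw [Finset.sum_eq_single N
        (fun S hS hSN => by rw [map_smul, hstep0 S (Finset.mem_powerset.mp hS) hSN, smul_zero])
        (fun hc => absurd (Finset.mem_powerset.mpr hN) hc)]
      rw [map_smul, hbN, smul_smul]
    have h0 := h (b1 * (b2 * b3)) hb_mem
    rw [phi, ContinuousLinearMap.mul_apply] at h0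
    rw [← ContinuousLinearMap.adjoint_inner_left, ← hgdef, hbPhi, inner_smul_right,
      EuclideanSpace.inner_single_right, one_mul] at h0
    rcases mul_eq_zero.mp h0 with hc | hc
    · exact absurd hc (mul_ne_zero (hscal_ne N (Finset.mem_powerset.mpr hN)) hd0)
    · have := congrArg (starRingEnd ℂ) hc
      simpa using this
  -- Step 2: matrix elements between subsets of I vanish
  have key2 : ∀ M' M : Finset L, M' ⊆ I → M ⊆ I → me g M' M = 0 := by
    intro M' M hM' hM
    have hcomp := key1 M' (M.image ι) hM' (himg_subset hM)
    rw [hPhi, map_sum, WithLp.ofLp_sum, Finset.sum_apply] at hcomp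
    simp only [map_smul] at hcomp
    have hsingle : ∀ S ∈ I.powerset, S ≠ M →
        ((((Real.sqrt (p S) : ℂ)) * c S) • g (EuclideanSpace.single (S ∪ S.image ι) (1:ℂ)))
          (M' ∪ M.image ι) = 0 := by
      intro S hS hSM
      have hS' := Finset.mem_powerset.mp hS
      have hzero : me g (M' ∪ M.image ι) (S ∪ S.image ι) = 0 := by
        refine suppA hg _ _ ?_
        rw [sdiff_eq_of_subset (Finset.disjoint_of_subset_left (himg_subset hM) hIJ.symm) hM',
          sdiff_eq_of_subset (Finset.disjoint_of_subset_left (himg_subset hS') hIJ.symm) hS']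
        exact fun hc => hSM (himg_inj M S hM hS' hc).symm
      unfold me at hzero
      simp [hzero]
    rw [Finset.sum_eq_single M hsingle
      (fun hc => absurd (Finset.mem_powerset.mpr hM) hc)] at hcomp
    have : me g (M' ∪ M.image ι) (M ∪ M.image ι) = 0 := by
      have hx : (((Real.sqrt (p M) : ℂ)) * c M) *
          (g (EuclideanSpace.single (M ∪ M.image ι) (1:ℂ))) (M' ∪ M.image ι) = 0 := by
        simpa using hcomp
      rcases mul_eq_zero.mp hx with hc | hc
      · exact absurd hc (hscal_ne M (Finset.mem_powerset.mpr hM))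
      · exact hc
    rw [signA hg (M.image ι) M' M
      (Finset.disjoint_of_subset_left (himg_subset hM) hIJ.symm) hM hM'] at this
    rcases mul_eq_zero.mp this with hc | hc
    · rcases mul_eq_zero.mp hc with hc' | hc'
      · exact absurd hc' (ts_ne_zero _ _)
      · exact absurd hc' (ts_ne_zero _ _)
    · exact hc
  -- Step 3: all matrix elements of g vanish
  have hg0 : g = 0 := by
    refine eq_zero_of_me g fun S' S => ?_
    by_cases hss : S' \ I = S \ I
    · have hS : S = (S ∩ I) ∪ (S \ I) := (inter_union_sdiff_self I S).symm
      have hS' : S' = (S' ∩ I) ∪ (S \ I) := by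
        rw [← hss]; exact (inter_union_sdiff_self I S').symm
      rw [hS, hS']
      rw [signA hg (S \ I) (S' ∩ I) (S ∩ I) (Finset.sdiff_disjoint)
        Finset.inter_subset_right Finset.inter_subset_right,
        key2 _ _ Finset.inter_subset_right Finset.inter_subset_right, mul_zero]
    · exact suppA hg S' S hss
  have : star a = 0 := by rwa [ContinuousLinearMap.star_eq_adjoint]
  rw [← ContinuousLinearMap.adjoint_adjoint a, ← hgdef, hg0, map_zero]

end Fermion
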